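/- With α_{j,k} and ν_j as defined from the oscillator wave functions: if k is odd then α_{j,k} = 0 for all 0 < j ≤ k, and if k > 0 is even then α_{1,k} > 0; moreover α_{j,k} = α_{1,k} ν_j / ν_1 for 0 < j ≤ k. -/

import Mathlib

open MeasureTheory

/-- Physicists' Hermite polynomials. -/
noncomputable def hermiteP : ℕ → ℝ → ℝ
  | 0 => fun _ => 1
  | 1 => fun x => 2 * x
  | (n + 2) => fun x => 2 * x * hermiteP (n + 1) x - 2 * ((n : ℝ) + 1) * hermiteP n x

/-- The oscillator wave functions `φ_j(x) = (2^j j! √π)^{-1/2} e^{-x²/2} H_j(x)`. -/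
noncomputable def phi (j : ℕ) (x : ℝ) : ℝ :=
  (Real.sqrt (2 ^ j * (j.factorial : ℝ) * Real.sqrt Real.pi))⁻¹ *
    Real.exp (-x ^ 2 / 2) * hermiteP j x

/-- `ν_k = ∫ φ_{k-1}` for `k ≥ 1`, with the convention `ν_0 = 0`. -/
noncomputable def nu (k : ℕ) : ℝ :=
  if k = 0 then 0 else ∫ x : ℝ, phi (k - 1) x

/-- `α_{j,k} = ∫∫ φ_{k-1}(x) φ_{j-1}(y) sgn(x-y) dx dy` for `j, k ≥ 1`,
with the convention `α_{0,k} = α_{j,0} = 0`. -/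
noncomputable def alph (j k : ℕ) : ℝ :=
  if j = 0 ∨ k = 0 then 0
  else ∫ y : ℝ, ∫ x : ℝ, phi (k - 1) x * phi (j - 1) y * Real.sign (x - y)

namespace Stmt8
open Filter Set Polynomial

/-- two-step induction helper -/
theorem twoStep {P : ℕ → Prop} (h0 : P 0) (h1 : P 1)
    (hs : ∀ n, P n → P (n + 1) → P (n + 2)) : ∀ n, P n := by
  intro n
  induction n using Nat.strong_induction_on with
  | _ n ih =>
    match n with
    | 0 => exact h0
    | 1 => exact h1
    | (m + 2) => exact hs m (ih m (by omega)) (ih (m + 1) (by omega))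

noncomputable def E (x : ℝ) : ℝ := Real.exp (-x ^ 2 / 2)

noncomputable def W (x : ℝ) : ℝ := E x * E x

noncomputable def qq : ℕ → ℝ → ℝ
  | 0 => fun _ => 0
  | 1 => fun _ => -2
  | (n + 2) => fun x => -2 * hermiteP (n + 1) x + 2 * ((n : ℝ) + 1) * qq n x

noncomputable def cc : ℕ → ℝ
  | 0 => 1
  | 1 => 0
  | (n + 2) => 2 * ((n : ℝ) + 1) * cc n

lemma hermiteP_zero (x : ℝ) : hermiteP 0 x = 1 := rfl
lemma hermiteP_one (x : ℝ) : hermiteP 1 x = 2 * x := rfl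
lemma hermiteP_ss (n : ℕ) (x : ℝ) :
    hermiteP (n + 2) x = 2 * x * hermiteP (n + 1) x - 2 * ((n : ℝ) + 1) * hermiteP n x := rfl
lemma qq_zero (x : ℝ) : qq 0 x = 0 := rfl
lemma qq_one (x : ℝ) : qq 1 x = -2 := rfl
lemma qq_ss (n : ℕ) (x : ℝ) :
    qq (n + 2) x = -2 * hermiteP (n + 1) x + 2 * ((n : ℝ) + 1) * qq n x := rfl
lemma cc_zero : cc 0 = 1 := rfl
lemma cc_one : cc 1 = 0 := rfl
lemma cc_ss (n : ℕ) : cc (n + 2) = 2 * ((n : ℝ) + 1) * cc n := rfl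

/-- polynomial functions -/
def IsPoly (f : ℝ → ℝ) : Prop := ∃ P : Polynomial ℝ, ∀ x, f x = P.eval x

lemma IsPoly.const (c : ℝ) : IsPoly (fun _ => c) := ⟨C c, by simp⟩

lemma IsPoly.mul {f g : ℝ → ℝ} (hf : IsPoly f) (hg : IsPoly g) :
    IsPoly (fun x => f x * g x) := by
  obtain ⟨P, hP⟩ := hf; obtain ⟨Q, hQ⟩ := hg
  exact ⟨P * Q, fun x => by simp [hP, hQ]⟩

lemma IsPoly.add {f g : ℝ → ℝ} (hf : IsPoly f) (hg : IsPoly g) :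
    IsPoly (fun x => f x + g x) := by
  obtain ⟨P, hP⟩ := hf; obtain ⟨Q, hQ⟩ := hg
  exact ⟨P + Q, fun x => by simp [hP, hQ]⟩

lemma IsPoly.sub {f g : ℝ → ℝ} (hf : IsPoly f) (hg : IsPoly g) :
    IsPoly (fun x => f x - g x) := by
  obtain ⟨P, hP⟩ := hf; obtain ⟨Q, hQ⟩ := hg
  exact ⟨P - Q, fun x => by simp [hP, hQ]⟩

lemma isPoly_id : IsPoly (fun x => x) := ⟨X, by simp⟩

lemma IsPoly.neg {f : ℝ → ℝ} (hf : IsPoly f) : IsPoly (fun x => -f x) := by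
  obtain ⟨P, hP⟩ := hf
  exact ⟨-P, fun x => by simp [hP]⟩

lemma isPoly_hermiteP (n : ℕ) : IsPoly (hermiteP n) := by
  induction n using twoStep with
  | h0 => exact ⟨C 1, fun x => by simp [hermiteP_zero]⟩
  | h1 => exact ⟨C 2 * X, fun x => by simp [hermiteP_one]⟩
  | hs n ihn ihn1 =>
    have h : IsPoly (fun x => 2 * x * hermiteP (n + 1) x - 2 * ((n : ℝ) + 1) * hermiteP n x) :=
      (((IsPoly.const 2).mul isPoly_id).mul ihn1).sub ((IsPoly.const _).mul ihn)
    obtain ⟨P, hP⟩ := h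
    exact ⟨P, fun x => by rw [hermiteP_ss]; exact hP x⟩

lemma isPoly_qq (n : ℕ) : IsPoly (qq n) := by
  induction n using twoStep with
  | h0 => exact ⟨0, fun x => by simp [qq_zero]⟩
  | h1 => exact ⟨C (-2), fun x => by simp [qq_one]⟩
  | hs n ihn ihn1 =>
    have h : IsPoly (fun x => -2 * hermiteP (n + 1) x + 2 * ((n : ℝ) + 1) * qq n x) :=
      ((IsPoly.const (-2)).mul (isPoly_hermiteP (n + 1))).add ((IsPoly.const _).mul ihn)
    obtain ⟨P, hP⟩ := h
    exact ⟨P, fun x => by rw [qq_ss]; exact hP x⟩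

lemma IsPoly.continuous {f : ℝ → ℝ} (hf : IsPoly f) : Continuous f := by
  obtain ⟨P, hP⟩ := hf
  have : f = fun x => P.eval x := funext hP
  rw [this]; exact P.continuous

/- tendsto of poly * gaussian -/
lemma tendsto_poly_gauss_atTop (P : Polynomial ℝ) {b : ℝ} (hb : 0 < b) :
    Tendsto (fun x => P.eval x * Real.exp (-b * x ^ 2)) atTop (nhds 0) := by
  have key : ∀ i : ℕ, Tendsto (fun x : ℝ => x ^ i * Real.exp (-b * x ^ 2)) atTop (nhds 0) := by
    intro i
    have h := (rpow_mul_exp_neg_mul_sq_isLittleO_exp_neg hb (i : ℝ)).tendsto_zero_of_tendsto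
      (by
        have : Tendsto (fun x : ℝ => -(1 / 2) * x) atTop atBot := by
          exact Tendsto.const_mul_atTop_of_neg (by norm_num) tendsto_id
        exact Real.tendsto_exp_atBot.comp this)
    simpa [Real.rpow_natCast] using h
  have : (fun x => P.eval x * Real.exp (-b * x ^ 2)) =
      fun x => ∑ i ∈ Finset.range (P.natDegree + 1),
        P.coeff i * (x ^ i * Real.exp (-b * x ^ 2)) := by
    funext x
    rw [Polynomial.eval_eq_sum_range, Finset.sum_mul]
    congr 1; funext i; ring
  rw [this]
  have := tendsto_finset_sum (Finset.range (P.natDegree + 1))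
    (fun i _ => ((key i).const_mul (P.coeff i)))
  simpa using this

lemma tendsto_poly_gauss_atBot (P : Polynomial ℝ) {b : ℝ} (hb : 0 < b) :
    Tendsto (fun x => P.eval x * Real.exp (-b * x ^ 2)) atBot (nhds 0) := by
  have h := (tendsto_poly_gauss_atTop (P.comp (-X)) hb).comp tendsto_neg_atBot_atTop
  have : ((fun x => (P.comp (-X)).eval x * Real.exp (-b * x ^ 2)) ∘ Neg.neg) =
      fun x : ℝ => P.eval x * Real.exp (-b * x ^ 2) := by
    funext x; simp [Function.comp, Polynomial.eval_comp]
  rwa [this] at h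

lemma exists_bound {f : ℝ → ℝ} (hc : Continuous f) (ht : Tendsto f atTop (nhds 0))
    (hb : Tendsto f atBot (nhds 0)) : ∃ C : ℝ, ∀ x, |f x| ≤ C := by
  have h1 : ∀ᶠ x in atTop, f x ∈ Metric.ball (0 : ℝ) 1 :=
    ht.eventually_mem (Metric.ball_mem_nhds 0 one_pos)
  have h2 : ∀ᶠ x in atBot, f x ∈ Metric.ball (0 : ℝ) 1 :=
    hb.eventually_mem (Metric.ball_mem_nhds 0 one_pos)
  obtain ⟨A, hA⟩ := eventually_atTop.1 h1
  obtain ⟨B, hB⟩ := eventually_atBot.1 h2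
  obtain ⟨C, hC⟩ := (isCompact_Icc (a := B) (b := A)).exists_bound_of_continuousOn
    hc.continuousOn
  refine ⟨max C 1, fun x => ?_⟩
  rcases le_or_gt A x with h | h
  · have := hA x h
    rw [Metric.mem_ball, Real.dist_eq, sub_zero] at this
    exact le_trans this.le (le_max_right _ _)
  rcases le_or_gt x B with h' | h'
  · have := hB x h'
    rw [Metric.mem_ball, Real.dist_eq, sub_zero] at this
    exact le_trans this.le (le_max_right _ _)
  · have := hC x ⟨h'.le, h.le⟩
    exact le_trans this (le_max_left _ _)

lemma integrable_poly_gauss (P : Polynomial ℝ) {b : ℝ} (hb : 0 < b) :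
    Integrable (fun x => P.eval x * Real.exp (-b * x ^ 2)) := by
  have hb2 : 0 < b / 2 := by linarith
  have hcont : Continuous fun x : ℝ => P.eval x * Real.exp (-(b / 2) * x ^ 2) :=
    P.continuous.mul (Real.continuous_exp.comp (continuous_const.mul (continuous_pow 2)))
  obtain ⟨C, hC⟩ := exists_bound hcont
    (tendsto_poly_gauss_atTop P hb2) (tendsto_poly_gauss_atBot P hb2)
  apply Integrable.mono' (((integrable_exp_neg_mul_sq hb2).const_mul C))
    ((P.continuous.mul (Real.continuous_exp.comp
      (continuous_const.mul (continuous_pow 2)))).aestronglyMeasurable)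
  refine Filter.Eventually.of_forall (fun x => ?_)
  have hsplit : Real.exp (-b * x ^ 2) =
      Real.exp (-(b / 2) * x ^ 2) * Real.exp (-(b / 2) * x ^ 2) := by
    rw [← Real.exp_add]; ring_nf
  have hEpos : 0 < Real.exp (-(b / 2) * x ^ 2) := Real.exp_pos _
  show |eval x P * Real.exp (-b * x ^ 2)| ≤ _
  rw [hsplit, ← mul_assoc, abs_mul, abs_of_pos hEpos]
  exact mul_le_mul_of_nonneg_right (hC x) hEpos.le

/-! ### basics about `E` and `W` -/

lemma E_pos (x : ℝ) : 0 < E x := Real.exp_pos _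

lemma E_def (x : ℝ) : E x = Real.exp (-x ^ 2 / 2) := rfl
lemma W_def (x : ℝ) : W x = E x * E x := rfl

lemma E_le_one (x : ℝ) : E x ≤ 1 := by
  rw [E_def, Real.exp_le_one_iff]
  nlinarith [sq_nonneg x]

lemma E_eq (x : ℝ) : E x = Real.exp (-(1 / 2 : ℝ) * x ^ 2) := by
  rw [E_def]; congr 1; ring

lemma E_neg (x : ℝ) : E (-x) = E x := by rw [E_def, E_def]; congr 1; ring

lemma W_eq (x : ℝ) : W x = Real.exp (-(1 : ℝ) * x ^ 2) := by
  rw [W_def, E_def, ← Real.exp_add]; congr 1; ring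

lemma continuous_E : Continuous E := by
  have : E = fun x => Real.exp (-(1 / 2 : ℝ) * x ^ 2) := funext E_eq
  rw [this]
  exact Real.continuous_exp.comp (continuous_const.mul (continuous_pow 2))

lemma integrable_E : Integrable E := by
  have : E = fun x => Real.exp (-(1 / 2 : ℝ) * x ^ 2) := funext E_eq
  rw [this]
  exact integrable_exp_neg_mul_sq (by norm_num)

lemma E_hasDerivAt (x : ℝ) : HasDerivAt E (-x * E x) x := by
  have h1 : HasDerivAt (fun t : ℝ => -t ^ 2 / 2) (-x) x := by
    have := ((hasDerivAt_pow 2 x).neg).div_const 2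
    refine this.congr_deriv ?_
    simp; ring
  have := h1.exp
  refine this.congr_deriv ?_
  rw [E_def]; ring

lemma W_hasDerivAt (x : ℝ) : HasDerivAt W (-2 * x * W x) x := by
  have := (E_hasDerivAt x).mul (E_hasDerivAt x)
  refine this.congr_deriv ?_
  rw [W_def]; ring

/-! ### derivatives of the Hermite functions -/

lemma hermiteP_hasDerivAt (n : ℕ) (x : ℝ) :
    HasDerivAt (hermiteP (n + 1)) (2 * ((n : ℝ) + 1) * hermiteP n x) x := by
  induction n using twoStep generalizing x with
  | h0 =>
    have h2x : HasDerivAt (fun t : ℝ => 2 * t) 2 x := by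
      simpa using (hasDerivAt_id x).const_mul (2 : ℝ)
    have h2 : hermiteP 1 = fun t : ℝ => 2 * t := funext hermiteP_one
    rw [h2]
    exact h2x.congr_deriv (by simp [hermiteP_zero])
  | h1 =>
    have h2x : HasDerivAt (fun t : ℝ => 2 * t) 2 x := by
      simpa using (hasDerivAt_id x).const_mul (2 : ℝ)
    have h2 : hermiteP 2 = fun t : ℝ => 2 * t * (2 * t) - 2 * ((0 : ℝ) + 1) * 1 := by
      funext t; rw [show (2 : ℕ) = 0 + 2 from rfl, hermiteP_ss]
      rw [hermiteP_one, hermiteP_zero]; norm_num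
    rw [h2]
    refine (((h2x.mul h2x).sub_const _)).congr_deriv ?_
    rw [hermiteP_one]; push_cast; ring
  | hs n ihn ihn1 =>
    have h2x : HasDerivAt (fun t : ℝ => 2 * t) 2 x := by
      simpa using (hasDerivAt_id x).const_mul (2 : ℝ)
    have hfun : hermiteP (n + 3) = fun t : ℝ =>
        2 * t * hermiteP (n + 2) t - 2 * ((n : ℝ) + 1 + 1) * hermiteP (n + 1) t := by
      funext t
      rw [show n + 3 = (n + 1) + 2 from rfl, hermiteP_ss]
      push_cast; ring
    rw [hfun]
    have h := (h2x.mul (ihn1 x)).sub ((ihn x).const_mul (2 * ((n : ℝ) + 1 + 1)))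
    refine h.congr_deriv ?_
    rw [hermiteP_ss]
    push_cast; ring

lemma hermiteP_hasDerivAt' (n : ℕ) (x : ℝ) :
    HasDerivAt (hermiteP n) (2 * (n : ℝ) * hermiteP (n - 1) x) x := by
  match n with
  | 0 =>
    have h2 : hermiteP 0 = fun _ : ℝ => (1 : ℝ) := funext hermiteP_zero
    rw [h2]
    exact (hasDerivAt_const x 1).congr_deriv (by simp)
  | (m + 1) =>
    refine (hermiteP_hasDerivAt m x).congr_deriv ?_
    push_cast; ring_nf

lemma qq_hasDerivAt (n : ℕ) (x : ℝ) :
    HasDerivAt (qq n) (x * qq n x + hermiteP n x - cc n) x := by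
  induction n using twoStep generalizing x with
  | h0 =>
    have h2 : qq 0 = fun _ : ℝ => (0 : ℝ) := funext qq_zero
    rw [h2]
    exact (hasDerivAt_const x 0).congr_deriv
      (by simp only [hermiteP_zero, cc_zero]; ring)
  | h1 =>
    have h2 : qq 1 = fun _ : ℝ => (-2 : ℝ) := funext qq_one
    rw [h2]
    exact (hasDerivAt_const x (-2)).congr_deriv
      (by simp only [hermiteP_one, cc_one]; ring)
  | hs n ihn ihn1 =>
    have hfun : qq (n + 2) = fun t : ℝ =>
        -2 * hermiteP (n + 1) t + 2 * ((n : ℝ) + 1) * qq n t := funext (qq_ss n)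
    rw [hfun]
    have h := ((hermiteP_hasDerivAt n x).const_mul (-2)).add
      ((ihn x).const_mul (2 * ((n : ℝ) + 1)))
    refine h.congr_deriv ?_
    simp only [hermiteP_ss, cc_ss]
    ring

lemma Eqq_hasDerivAt (n : ℕ) (x : ℝ) :
    HasDerivAt (fun t => E t * qq n t) (E x * (hermiteP n x - cc n)) x :=
  ((E_hasDerivAt x).mul (qq_hasDerivAt n x)).congr_deriv (by ring)

lemma WH_hasDerivAt (n : ℕ) (x : ℝ) :
    HasDerivAt (fun t => W t * hermiteP n t) (-(W x * hermiteP (n + 1) x)) x := by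
  refine ((W_hasDerivAt x).mul (hermiteP_hasDerivAt' n x)).congr_deriv ?_
  match n with
  | 0 => rw [hermiteP_one, hermiteP_zero]; push_cast; ring
  | (m + 1) =>
    rw [hermiteP_ss]
    push_cast
    ring

lemma Wqq_hasDerivAt (m n : ℕ) (x : ℝ) :
    HasDerivAt (fun t => W t * qq m t * qq n t)
      (W x * ((hermiteP m x - cc m) * qq n x + (hermiteP n x - cc n) * qq m x)) x :=
  (((W_hasDerivAt x).mul (qq_hasDerivAt m x)).mul (qq_hasDerivAt n x)).congr_deriv (by simp only [Pi.mul_apply]; ring)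

lemma WHH_hasDerivAt (a l : ℕ) (x : ℝ) :
    HasDerivAt (fun t => W t * hermiteP a t * hermiteP l t)
      (-(W x * hermiteP (a + 1) x * hermiteP l x)
        + W x * hermiteP a x * (2 * (l : ℝ) * hermiteP (l - 1) x)) x :=
  ((WH_hasDerivAt a x).mul (hermiteP_hasDerivAt' l x)).congr_deriv (by ring)

/-! ### integrability and limits for poly × gaussian -/

lemma integrable_E_mul {f : ℝ → ℝ} (hf : IsPoly f) : Integrable (fun x => E x * f x) := by
  obtain ⟨P, hP⟩ := hf
  have : (fun x => E x * f x) = fun x => P.eval x * Real.exp (-(1 / 2 : ℝ) * x ^ 2) := by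
    funext x; rw [hP, E_eq]; ring
  rw [this]
  exact integrable_poly_gauss P (by norm_num)

lemma aesm_E_mul {f : ℝ → ℝ} (hf : IsPoly f) :
    AEStronglyMeasurable (fun x => E x * f x) volume :=
  (continuous_E.mul hf.continuous).aestronglyMeasurable

lemma integrable_W_mul {f : ℝ → ℝ} (hf : IsPoly f) : Integrable (fun x => W x * f x) := by
  apply Integrable.mono' (integrable_E_mul hf).abs
    ((continuous_E.mul (continuous_E.mul hf.continuous)).aestronglyMeasurable.congr ?_)
  · refine Filter.Eventually.of_forall (fun x => ?_)
    have h1 : ‖W x * f x‖ = E x * (E x * |f x|) := by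
      rw [Real.norm_eq_abs, W_def, abs_mul, abs_mul, abs_of_pos (E_pos x)]; ring
    rw [h1]
    calc E x * (E x * |f x|) ≤ 1 * (E x * |f x|) :=
          mul_le_mul_of_nonneg_right (E_le_one x)
            (mul_nonneg (E_pos x).le (abs_nonneg _))
      _ = |E x * f x| := by rw [one_mul, abs_mul, abs_of_pos (E_pos x)]
  · exact Filter.Eventually.of_forall (fun x => by simp only [W_def, Pi.mul_apply]; ring)

lemma tendsto_E_mul_atTop {f : ℝ → ℝ} (hf : IsPoly f) :
    Tendsto (fun x => E x * f x) atTop (nhds 0) := by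
  obtain ⟨P, hP⟩ := hf
  have : (fun x => E x * f x) = fun x => P.eval x * Real.exp (-(1 / 2 : ℝ) * x ^ 2) := by
    funext x; rw [hP, E_eq]; ring
  rw [this]
  exact tendsto_poly_gauss_atTop P (by norm_num)

lemma tendsto_E_mul_atBot {f : ℝ → ℝ} (hf : IsPoly f) :
    Tendsto (fun x => E x * f x) atBot (nhds 0) := by
  obtain ⟨P, hP⟩ := hf
  have : (fun x => E x * f x) = fun x => P.eval x * Real.exp (-(1 / 2 : ℝ) * x ^ 2) := by
    funext x; rw [hP, E_eq]; ring
  rw [this]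
  exact tendsto_poly_gauss_atBot P (by norm_num)

lemma tendsto_W_mul {l : Filter ℝ} (hl : l = atTop ∨ l = atBot) {f : ℝ → ℝ} (hf : IsPoly f) :
    Tendsto (fun x => W x * f x) l (nhds 0) := by
  have hE : Tendsto (fun x => ‖E x * f x‖) l (nhds 0) := by
    rcases hl with rfl | rfl
    · rw [show (0 : ℝ) = ‖(0 : ℝ)‖ by simp]
      exact (tendsto_E_mul_atTop hf).norm
    · rw [show (0 : ℝ) = ‖(0 : ℝ)‖ by simp]
      exact (tendsto_E_mul_atBot hf).norm
  apply squeeze_zero_norm _ hE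
  intro x
  have h1 : ‖W x * f x‖ = E x * ‖E x * f x‖ := by
    rw [Real.norm_eq_abs, Real.norm_eq_abs, W_def, abs_mul, abs_mul, abs_mul,
      abs_of_pos (E_pos x)]; ring
  rw [h1]
  calc E x * ‖E x * f x‖ ≤ 1 * ‖E x * f x‖ :=
        mul_le_mul_of_nonneg_right (E_le_one x) (norm_nonneg _)
    _ = ‖E x * f x‖ := one_mul _

/-! ### whole-line FTC -/

lemma integral_deriv_eq_zero {f f' : ℝ → ℝ} (hd : ∀ x, HasDerivAt f (f' x) x)
    (hi : Integrable f') (ht : Tendsto f atTop (nhds 0)) (hb : Tendsto f atBot (nhds 0)) :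
    ∫ x, f' x = 0 := by
  have h1 : ∫ x in Ioi (0 : ℝ), f' x = 0 - f 0 :=
    integral_Ioi_of_hasDerivAt_of_tendsto' (fun x _ => hd x) hi.integrableOn ht
  have h2 : ∫ x in Iic (0 : ℝ), f' x = f 0 - 0 :=
    integral_Iic_of_hasDerivAt_of_tendsto' (fun x _ => hd x) hi.integrableOn hb
  rw [← intervalIntegral.integral_Iic_add_Ioi hi.integrableOn hi.integrableOn, h1, h2]
  ring

/-! ### the function S -/

noncomputable def S (y : ℝ) : ℝ := (∫ x in Ioi y, E x) - ∫ x in Iic y, E x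

lemma S_def (y : ℝ) : S y = (∫ x in Ioi y, E x) - ∫ x in Iic y, E x := rfl

lemma S_bound (y : ℝ) : |S y| ≤ ∫ x, E x := by
  have ha : 0 ≤ ∫ x in Ioi y, E x := setIntegral_nonneg measurableSet_Ioi
    (fun x _ => (E_pos x).le)
  have hb : 0 ≤ ∫ x in Iic y, E x := setIntegral_nonneg measurableSet_Iic
    (fun x _ => (E_pos x).le)
  have hsum : (∫ x in Iic y, E x) + ∫ x in Ioi y, E x = ∫ x, E x :=
    intervalIntegral.integral_Iic_add_Ioi integrable_E.integrableOn integrable_E.integrableOn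
  rw [S_def, abs_le]
  constructor <;> nlinarith

lemma S_eq (y : ℝ) : S y = (∫ x, E x) - 2 * ∫ x in Iic y, E x := by
  have hsum : (∫ x in Iic y, E x) + ∫ x in Ioi y, E x = ∫ x, E x :=
    intervalIntegral.integral_Iic_add_Ioi integrable_E.integrableOn integrable_E.integrableOn
  rw [S_def]; linarith

lemma S_hasDerivAt (y : ℝ) : HasDerivAt S (-2 * E y) y := by
  have hfun : S = fun y => (∫ x, E x) - 2 * ((∫ x in Iic (0 : ℝ), E x) + ∫ x in (0 : ℝ)..y, E x) := by
    funext z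
    rw [S_eq]
    have : (∫ x in Iic z, E x) - ∫ x in Iic (0 : ℝ), E x = ∫ x in (0 : ℝ)..z, E x :=
      intervalIntegral.integral_Iic_sub_Iic integrable_E.integrableOn integrable_E.integrableOn
    have h2 : (∫ x in Iic z, E x) = (∫ x in Iic (0 : ℝ), E x) + ∫ x in (0 : ℝ)..z, E x := by
      linarith
    rw [h2]
  rw [hfun]
  have h3 : HasDerivAt (fun u => ∫ x in (0 : ℝ)..u, E x) (E y) y :=
    (continuous_E.integral_hasStrictDerivAt 0 y).hasDerivAt
  have h4 := ((h3.const_add (∫ x in Iic (0 : ℝ), E x)).const_mul (2 : ℝ)).const_sub (∫ x, E x)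
  exact h4.congr_deriv (by ring)

lemma continuous_S : Continuous S :=
  continuous_iff_continuousAt.mpr (fun y => (S_hasDerivAt y).continuousAt)

lemma S_neg (y : ℝ) : S (-y) = -S y := by
  have h1 : (∫ x in Ioi (-y), E x) = ∫ x in Iic y, E x := by
    rw [← integral_comp_neg_Iic y E]
    exact setIntegral_congr_fun measurableSet_Iic (fun x _ => E_neg x)
  have h2 : (∫ x in Iic (-y), E x) = ∫ x in Ioi y, E x := by
    rw [← integral_comp_neg_Ioi y E]
    exact setIntegral_congr_fun measurableSet_Ioi (fun x _ => E_neg x)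
  rw [S_def, S_def, h1, h2]
  ring

/-! ### shape helpers -/

lemma integrable_W_shape {g f : ℝ → ℝ} (hf : IsPoly f) (h : ∀ x, g x = W x * f x) :
    Integrable g :=
  (integrable_W_mul hf).congr (Filter.Eventually.of_forall (fun x => (h x).symm))

lemma integrable_E_shape {g f : ℝ → ℝ} (hf : IsPoly f) (h : ∀ x, g x = E x * f x) :
    Integrable g :=
  (integrable_E_mul hf).congr (Filter.Eventually.of_forall (fun x => (h x).symm))

lemma tendsto_W_shape {l : Filter ℝ} (hl : l = atTop ∨ l = atBot) {g f : ℝ → ℝ}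
    (hf : IsPoly f) (h : ∀ x, g x = W x * f x) : Tendsto g l (nhds 0) := by
  have : g = fun x => W x * f x := funext h
  rw [this]; exact tendsto_W_mul hl hf

/-! ### the moments J, orthogonality, B and c -/

lemma J_succ (n : ℕ) : ∫ x, W x * hermiteP (n + 1) x = 0 := by
  have h := integral_deriv_eq_zero (f := fun t => W t * hermiteP n t)
    (f' := fun x => -(W x * hermiteP (n + 1) x)) (WH_hasDerivAt n)
    (integrable_W_shape (f := fun x => -hermiteP (n + 1) x)
      ((isPoly_hermiteP (n + 1)).neg) (fun x => by ring))
    (tendsto_W_mul (Or.inl rfl) (isPoly_hermiteP n))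
    (tendsto_W_mul (Or.inr rfl) (isPoly_hermiteP n))
  rw [integral_neg] at h
  linarith

lemma orth_aux (a : ℕ) : ∀ l, ∫ x, W x * hermiteP (l + a + 1) x * hermiteP l x = 0 := by
  intro l
  induction l with
  | zero =>
    have hfun : (fun x => W x * hermiteP (0 + a + 1) x * hermiteP 0 x)
        = fun x => W x * hermiteP (a + 1) x := by
      funext x
      rw [hermiteP_zero, Nat.zero_add, mul_one]
    rw [hfun]
    exact J_succ a
  | succ l ih =>
    have hint1 : Integrable (fun x => -(W x * hermiteP (l + a + 2) x * hermiteP (l + 1) x)) :=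
      integrable_W_shape (f := fun x => -(hermiteP (l + a + 2) x * hermiteP (l + 1) x))
        (((isPoly_hermiteP (l + a + 2)).mul (isPoly_hermiteP (l + 1))).neg)
        (fun x => by ring)
    have hint2 : Integrable
        (fun x => W x * hermiteP (l + a + 1) x * (2 * ((l : ℝ) + 1) * hermiteP l x)) :=
      integrable_W_shape
        (f := fun x => hermiteP (l + a + 1) x * (2 * ((l : ℝ) + 1) * hermiteP l x))
        ((isPoly_hermiteP _).mul (((IsPoly.const _).mul (isPoly_hermiteP _))))
        (fun x => by ring)
    have h := integral_deriv_eq_zero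
      (f := fun t => W t * hermiteP (l + a + 1) t * hermiteP (l + 1) t)
      (f' := fun x => -(W x * hermiteP (l + a + 2) x * hermiteP (l + 1) x)
        + W x * hermiteP (l + a + 1) x * (2 * ((l : ℝ) + 1) * hermiteP l x))
      (fun x => by
        have := WHH_hasDerivAt (l + a + 1) (l + 1) x
        refine this.congr_deriv ?_
        push_cast
        try simp only [Nat.add_sub_cancel]
        try ring)
      (hint1.add hint2)
      (tendsto_W_shape (Or.inl rfl)
        (f := fun x => hermiteP (l + a + 1) x * hermiteP (l + 1) x)
        ((isPoly_hermiteP _).mul (isPoly_hermiteP _)) (fun x => by ring))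
      (tendsto_W_shape (Or.inr rfl)
        (f := fun x => hermiteP (l + a + 1) x * hermiteP (l + 1) x)
        ((isPoly_hermiteP _).mul (isPoly_hermiteP _)) (fun x => by ring))
    rw [integral_add hint1 hint2, integral_neg] at h
    have h2 : ∫ x, W x * hermiteP (l + a + 1) x * (2 * ((l : ℝ) + 1) * hermiteP l x)
        = (2 * ((l : ℝ) + 1)) * ∫ x, W x * hermiteP (l + a + 1) x * hermiteP l x := by
      rw [← integral_const_mul]
      congr 1; funext x; ring
    rw [h2, ih] at h
    have hidx : l + 1 + a + 1 = l + a + 2 := by omega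
    rw [hidx]
    linarith

lemma orth {m l : ℕ} (h : l < m) : ∫ x, W x * hermiteP m x * hermiteP l x = 0 := by
  obtain ⟨a, rfl⟩ : ∃ a, m = l + a + 1 := ⟨m - l - 1, by omega⟩
  exact orth_aux a l

lemma BB_zero : ∫ x, W x * qq 0 x = 0 := by
  have hfun : (fun x => W x * qq 0 x) = fun _ => (0 : ℝ) := by
    funext x; rw [qq_zero, mul_zero]
  rw [hfun, integral_zero]

lemma BB_one : ∫ x, W x * qq 1 x = -2 * ∫ x, W x := by
  have hfun : (fun x => W x * qq 1 x) = fun x => -2 * W x := by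
    funext x; rw [qq_one]; ring
  rw [hfun, integral_const_mul]

lemma BB_ss (n : ℕ) : ∫ x, W x * qq (n + 2) x = 2 * ((n : ℝ) + 1) * ∫ x, W x * qq n x := by
  have hint1 : Integrable (fun x => (-2 : ℝ) * (W x * hermiteP (n + 1) x)) :=
    integrable_W_shape (f := fun x => -2 * hermiteP (n + 1) x)
      ((IsPoly.const (-2)).mul (isPoly_hermiteP _)) (fun x => by ring)
  have hint2 : Integrable (fun x => (2 * ((n : ℝ) + 1)) * (W x * qq n x)) :=
    integrable_W_shape (f := fun x => (2 * ((n : ℝ) + 1)) * qq n x)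
      ((IsPoly.const _).mul (isPoly_qq _)) (fun x => by ring)
  have hfun : (fun x => W x * qq (n + 2) x)
      = fun x => (-2 : ℝ) * (W x * hermiteP (n + 1) x) + (2 * ((n : ℝ) + 1)) * (W x * qq n x) := by
    funext x; rw [qq_ss]; ring
  rw [hfun, integral_add hint1 hint2, integral_const_mul, integral_const_mul, J_succ]
  ring

lemma IW_pos : 0 < ∫ x, W x := by
  have h : (∫ x, W x) = Real.sqrt (Real.pi / 1) := by
    rw [show W = fun x => Real.exp (-(1 : ℝ) * x ^ 2) from funext W_eq]
    exact integral_gaussian 1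
  rw [h]
  apply Real.sqrt_pos.mpr
  have := Real.pi_pos
  linarith

lemma IE_pos : 0 < ∫ x, E x := by
  have h : (∫ x, E x) = Real.sqrt (Real.pi / (1 / 2)) := by
    rw [show E = fun x => Real.exp (-(1 / 2 : ℝ) * x ^ 2) from funext E_eq]
    exact integral_gaussian (1 / 2)
  rw [h]
  apply Real.sqrt_pos.mpr
  have := Real.pi_pos
  positivity

lemma BB_even (r : ℕ) : ∫ x, W x * qq (2 * r) x = 0 := by
  induction r with
  | zero => exact BB_zero
  | succ r ih =>
    have hidx : 2 * (r + 1) = 2 * r + 2 := by omega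
    rw [hidx, BB_ss, ih, mul_zero]

lemma BB_odd_neg (r : ℕ) : (∫ x, W x * qq (2 * r + 1) x) < 0 := by
  induction r with
  | zero =>
    rw [BB_one]
    have := IW_pos
    linarith
  | succ r ih =>
    have hidx : 2 * (r + 1) + 1 = (2 * r + 1) + 2 := by omega
    rw [hidx, BB_ss]
    have hc : (0 : ℝ) < 2 * (((2 * r + 1 : ℕ) : ℝ) + 1) := by positivity
    exact mul_neg_of_pos_of_neg hc ih

lemma cc_odd (r : ℕ) : cc (2 * r + 1) = 0 := by
  induction r with
  | zero => exact cc_one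
  | succ r ih =>
    have hidx : 2 * (r + 1) + 1 = (2 * r + 1) + 2 := by omega
    rw [hidx, cc_ss, ih, mul_zero]

lemma cc_even_pos (r : ℕ) : 0 < cc (2 * r) := by
  induction r with
  | zero => rw [cc_zero]; norm_num
  | succ r ih =>
    have hidx : 2 * (r + 1) = (2 * r) + 2 := by omega
    rw [hidx, cc_ss]
    have hc : (0 : ℝ) < 2 * (((2 * r : ℕ) : ℝ) + 1) := by positivity
    exact mul_pos hc ih

/-! ### the A integrals -/

lemma Azero : ∀ m n : ℕ, m ≤ n → ∫ x, W x * hermiteP n x * qq m x = 0 := by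
  have key : ∀ m, ∀ n : ℕ, m ≤ n → ∫ x, W x * hermiteP n x * qq m x = 0 := by
    intro m
    induction m using twoStep with
    | h0 =>
      intro n _
      have hfun : (fun x => W x * hermiteP n x * qq 0 x) = fun _ => (0 : ℝ) := by
        funext x; rw [qq_zero, mul_zero]
      rw [hfun, integral_zero]
    | h1 =>
      intro n hn
      obtain ⟨n', rfl⟩ : ∃ n', n = n' + 1 := ⟨n - 1, by omega⟩
      have hfun : (fun x => W x * hermiteP (n' + 1) x * qq 1 x)
          = fun x => (-2 : ℝ) * (W x * hermiteP (n' + 1) x) := by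
        funext x; rw [qq_one]; ring
      rw [hfun, integral_const_mul, J_succ, mul_zero]
    | hs m ihm _ =>
      intro n hn
      have hint1 : Integrable (fun x => (-2 : ℝ) * (W x * hermiteP n x * hermiteP (m + 1) x)) :=
        integrable_W_shape (f := fun x => -2 * (hermiteP n x * hermiteP (m + 1) x))
          ((IsPoly.const (-2)).mul ((isPoly_hermiteP _).mul (isPoly_hermiteP _)))
          (fun x => by ring)
      have hint2 : Integrable (fun x => (2 * ((m : ℝ) + 1)) * (W x * hermiteP n x * qq m x)) :=
        integrable_W_shape (f := fun x => (2 * ((m : ℝ) + 1)) * (hermiteP n x * qq m x))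
          ((IsPoly.const _).mul ((isPoly_hermiteP _).mul (isPoly_qq _)))
          (fun x => by ring)
      have hfun : (fun x => W x * hermiteP n x * qq (m + 2) x)
          = fun x => (-2 : ℝ) * (W x * hermiteP n x * hermiteP (m + 1) x)
            + (2 * ((m : ℝ) + 1)) * (W x * hermiteP n x * qq m x) := by
        funext x; rw [qq_ss]; ring
      rw [hfun, integral_add hint1 hint2, integral_const_mul, integral_const_mul,
        orth (show m + 1 < n by omega), ihm n (by omega)]
      ring
  exact key

lemma Asym (m n : ℕ) :
    (∫ x, W x * hermiteP m x * qq n x) + (∫ x, W x * hermiteP n x * qq m x)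
      = cc m * (∫ x, W x * qq n x) + cc n * ∫ x, W x * qq m x := by
  have hi1 : Integrable (fun x => W x * hermiteP m x * qq n x) :=
    integrable_W_shape (f := fun x => hermiteP m x * qq n x)
      ((isPoly_hermiteP _).mul (isPoly_qq _)) (fun x => by ring)
  have hi2 : Integrable (fun x => W x * hermiteP n x * qq m x) :=
    integrable_W_shape (f := fun x => hermiteP n x * qq m x)
      ((isPoly_hermiteP _).mul (isPoly_qq _)) (fun x => by ring)
  have hi3 : Integrable (fun x => cc m * (W x * qq n x)) :=
    integrable_W_shape (f := fun x => cc m * qq n x)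
      ((IsPoly.const _).mul (isPoly_qq _)) (fun x => by ring)
  have hi4 : Integrable (fun x => cc n * (W x * qq m x)) :=
    integrable_W_shape (f := fun x => cc n * qq m x)
      ((IsPoly.const _).mul (isPoly_qq _)) (fun x => by ring)
  have h := integral_deriv_eq_zero (f := fun t => W t * qq m t * qq n t)
    (f' := fun x => (W x * hermiteP m x * qq n x - cc m * (W x * qq n x))
      + (W x * hermiteP n x * qq m x - cc n * (W x * qq m x)))
    (fun x => (Wqq_hasDerivAt m n x).congr_deriv (by ring))
    (((hi1.sub hi3).add (hi2.sub hi4)))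
    (tendsto_W_shape (Or.inl rfl) (f := fun x => qq m x * qq n x)
      ((isPoly_qq _).mul (isPoly_qq _)) (fun x => by ring))
    (tendsto_W_shape (Or.inr rfl) (f := fun x => qq m x * qq n x)
      ((isPoly_qq _).mul (isPoly_qq _)) (fun x => by ring))
  have e1 : (∫ x, ((W x * hermiteP m x * qq n x - cc m * (W x * qq n x))
        + (W x * hermiteP n x * qq m x - cc n * (W x * qq m x))))
      = (∫ x, (W x * hermiteP m x * qq n x - cc m * (W x * qq n x)))
        + ∫ x, (W x * hermiteP n x * qq m x - cc n * (W x * qq m x)) :=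
    integral_add (hi1.sub hi3) (hi2.sub hi4)
  have e2 : (∫ x, (W x * hermiteP m x * qq n x - cc m * (W x * qq n x)))
      = (∫ x, W x * hermiteP m x * qq n x) - ∫ x, cc m * (W x * qq n x) :=
    integral_sub hi1 hi3
  have e3 : (∫ x, (W x * hermiteP n x * qq m x - cc n * (W x * qq m x)))
      = (∫ x, W x * hermiteP n x * qq m x) - ∫ x, cc n * (W x * qq m x) :=
    integral_sub hi2 hi4
  have e4 : (∫ x, cc m * (W x * qq n x)) = cc m * ∫ x, W x * qq n x := integral_const_mul _ _
  have e5 : (∫ x, cc n * (W x * qq m x)) = cc n * ∫ x, W x * qq m x := integral_const_mul _ _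
  rw [e1, e2, e3, e4, e5] at h
  linear_combination h

lemma Amn {m n : ℕ} (h : m ≤ n) :
    ∫ x, W x * hermiteP m x * qq n x
      = cc m * (∫ x, W x * qq n x) + cc n * ∫ x, W x * qq m x := by
  have h1 := Asym m n
  rw [Azero m n h] at h1
  linarith

/-! ### the T integrals -/

lemma integrable_E_mul_S {f : ℝ → ℝ} (hf : IsPoly f) :
    Integrable (fun y => E y * f y * S y) := by
  apply Integrable.mono' ((integrable_E_mul hf).abs.mul_const (∫ x, E x))
  · exact ((continuous_E.mul hf.continuous).mul continuous_S).aestronglyMeasurable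
  · refine Filter.Eventually.of_forall (fun y => ?_)
    rw [Real.norm_eq_abs, abs_mul]
    exact mul_le_mul_of_nonneg_left (S_bound y) (abs_nonneg _)

lemma integrable_ES : Integrable (fun y => E y * S y) :=
  (integrable_E_mul_S (IsPoly.const 1)).congr
    (Filter.Eventually.of_forall (fun y => by ring))

lemma tendsto_EqqS {l : Filter ℝ} (hl : l = atTop ∨ l = atBot) (m : ℕ) :
    Tendsto (fun y => E y * qq m y * S y) l (nhds 0) := by
  have hE : Tendsto (fun y => ‖E y * qq m y‖ * ∫ x, E x) l (nhds 0) := by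
    have h0 : Tendsto (fun y => E y * qq m y) l (nhds 0) := by
      rcases hl with rfl | rfl
      · exact tendsto_E_mul_atTop (isPoly_qq m)
      · exact tendsto_E_mul_atBot (isPoly_qq m)
    have := (h0.norm.mul_const (∫ x, E x))
    simpa using this
  apply squeeze_zero_norm _ hE
  intro y
  rw [norm_mul]
  exact mul_le_mul_of_nonneg_left (by rw [Real.norm_eq_abs]; exact S_bound y) (norm_nonneg _)

lemma T_zero : ∫ y, E y * S y = 0 := by
  have h1 : ∫ y : ℝ, E (-y) * S (-y) = ∫ y, E y * S y :=
    integral_neg_eq_self (fun y => E y * S y) volume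
  have h2 : (fun y : ℝ => E (-y) * S (-y)) = fun y => -(E y * S y) := by
    funext y; rw [E_neg, S_neg]; ring
  rw [h2, integral_neg] at h1
  linarith

lemma T_eq (m : ℕ) : ∫ y, E y * hermiteP m y * S y = 2 * ∫ x, W x * qq m x := by
  have hi1 : Integrable (fun y => E y * hermiteP m y * S y) :=
    integrable_E_mul_S (isPoly_hermiteP m)
  have hi2 : Integrable (fun y => cc m * (E y * S y)) := (integrable_ES.const_mul _)
  have hi3 : Integrable (fun y => (2 : ℝ) * (W y * qq m y)) :=
    integrable_W_shape (f := fun x => 2 * qq m x)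
      ((IsPoly.const _).mul (isPoly_qq _)) (fun x => by ring)
  have h := integral_deriv_eq_zero (f := fun y => E y * qq m y * S y)
    (f' := fun y => (E y * hermiteP m y * S y - cc m * (E y * S y))
      - (2 : ℝ) * (W y * qq m y))
    (fun y => ((Eqq_hasDerivAt m y).mul (S_hasDerivAt y)).congr_deriv
      (by simp only [W_def]; ring))
    ((hi1.sub hi2).sub hi3)
    (tendsto_EqqS (Or.inl rfl) m) (tendsto_EqqS (Or.inr rfl) m)
  have e1 : (∫ y, ((E y * hermiteP m y * S y - cc m * (E y * S y)) - (2 : ℝ) * (W y * qq m y)))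
      = (∫ y, (E y * hermiteP m y * S y - cc m * (E y * S y)))
        - ∫ y, (2 : ℝ) * (W y * qq m y) := integral_sub (hi1.sub hi2) hi3
  have e2 : (∫ y, (E y * hermiteP m y * S y - cc m * (E y * S y)))
      = (∫ y, E y * hermiteP m y * S y) - ∫ y, cc m * (E y * S y) := integral_sub hi1 hi2
  have e3 : (∫ y, cc m * (E y * S y)) = cc m * ∫ y, E y * S y := integral_const_mul _ _
  have e4 : (∫ y, (2 : ℝ) * (W y * qq m y)) = (2 : ℝ) * ∫ y, W y * qq m y := integral_const_mul _ _
  rw [e1, e2, e3, e4, T_zero] at h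
  linarith

/-! ### sign integrals -/

lemma measurable_sign : Measurable Real.sign := by
  have h : Real.sign = fun r : ℝ => if r < 0 then (-1 : ℝ) else if 0 < r then 1 else 0 :=
    funext fun r => rfl
  rw [h]
  refine Measurable.ite ?_ measurable_const (Measurable.ite ?_ measurable_const measurable_const)
  · exact measurableSet_lt measurable_id measurable_const
  · exact measurableSet_lt measurable_const measurable_id

lemma abs_sign_le (z : ℝ) : |Real.sign z| ≤ 1 := by
  rcases Real.sign_apply_eq z with h | h | h <;> rw [h] <;> norm_num

lemma integrable_mul_sign {f : ℝ → ℝ} (hf : Integrable f) (hc : Continuous f) (y : ℝ) :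
    Integrable (fun x => f x * Real.sign (x - y)) := by
  apply Integrable.mono' hf.abs
  · exact (hc.measurable.mul
      (measurable_sign.comp (measurable_id.sub measurable_const))).aestronglyMeasurable
  · refine Filter.Eventually.of_forall (fun x => ?_)
    rw [Real.norm_eq_abs, abs_mul]
    exact mul_le_of_le_one_right (abs_nonneg _) (abs_sign_le _)

lemma signSplit {f : ℝ → ℝ} (hf : Integrable f) (hc : Continuous f) (y : ℝ) :
    ∫ x, f x * Real.sign (x - y) = (∫ x in Ioi y, f x) - ∫ x in Iic y, f x := by
  have hg : Integrable (fun x => f x * Real.sign (x - y)) := integrable_mul_sign hf hc y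
  rw [← intervalIntegral.integral_Iic_add_Ioi (b := y) hg.integrableOn hg.integrableOn]
  have h1 : ∫ x in Ioi y, f x * Real.sign (x - y) = ∫ x in Ioi y, f x :=
    setIntegral_congr_fun measurableSet_Ioi
      (fun x hx => by rw [Real.sign_of_pos (sub_pos.mpr hx), mul_one])
  have h2 : ∫ x in Iic y, f x * Real.sign (x - y) = ∫ x in Iic y, -f x := by
    apply setIntegral_congr_ae measurableSet_Iic
    have hy : ∀ᵐ x : ℝ, x ≠ y := by
      have hset : {x : ℝ | ¬ x ≠ y} = {y} := by ext z; simp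
      rw [ae_iff, hset]
      exact Real.volume_singleton
    filter_upwards [hy] with x hx hxle
    have hlt : x - y < 0 := by
      have : x < y := lt_of_le_of_ne hxle hx
      linarith
    rw [Real.sign_of_neg hlt]
    ring
  rw [h1, h2, integral_neg]
  ring

lemma int_Ioi_EH (n : ℕ) (y : ℝ) :
    ∫ x in Ioi y, E x * hermiteP n x
      = -(E y * qq n y) + cc n * ∫ x in Ioi y, E x := by
  have hint1 : Integrable (fun x => E x * (hermiteP n x - cc n)) :=
    integrable_E_mul ((isPoly_hermiteP n).sub (IsPoly.const _))
  have hF : ∫ x in Ioi y, E x * (hermiteP n x - cc n) = 0 - (E y * qq n y) :=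
    integral_Ioi_of_hasDerivAt_of_tendsto' (fun x _ => Eqq_hasDerivAt n x)
      hint1.integrableOn (tendsto_E_mul_atTop (isPoly_qq n))
  have hfun : (fun x => E x * hermiteP n x)
      = fun x => E x * (hermiteP n x - cc n) + cc n * E x := by
    funext x; ring
  have hadd : ∫ x in Ioi y, (E x * (hermiteP n x - cc n) + cc n * E x)
      = (∫ x in Ioi y, E x * (hermiteP n x - cc n)) + ∫ x in Ioi y, cc n * E x :=
    integral_add hint1.integrableOn ((integrable_E.const_mul (cc n)).integrableOn)
  rw [hfun, hadd, hF, integral_const_mul]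
  ring

lemma int_Iic_EH (n : ℕ) (y : ℝ) :
    ∫ x in Iic y, E x * hermiteP n x
      = (E y * qq n y) + cc n * ∫ x in Iic y, E x := by
  have hint1 : Integrable (fun x => E x * (hermiteP n x - cc n)) :=
    integrable_E_mul ((isPoly_hermiteP n).sub (IsPoly.const _))
  have hF : ∫ x in Iic y, E x * (hermiteP n x - cc n) = (E y * qq n y) - 0 :=
    integral_Iic_of_hasDerivAt_of_tendsto' (fun x _ => Eqq_hasDerivAt n x)
      hint1.integrableOn (tendsto_E_mul_atBot (isPoly_qq n))
  have hfun : (fun x => E x * hermiteP n x)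
      = fun x => E x * (hermiteP n x - cc n) + cc n * E x := by
    funext x; ring
  have hadd : ∫ x in Iic y, (E x * (hermiteP n x - cc n) + cc n * E x)
      = (∫ x in Iic y, E x * (hermiteP n x - cc n)) + ∫ x in Iic y, cc n * E x :=
    integral_add hint1.integrableOn ((integrable_E.const_mul (cc n)).integrableOn)
  rw [hfun, hadd, hF, integral_const_mul]
  ring

lemma Ginner (n : ℕ) (y : ℝ) :
    ∫ x, E x * hermiteP n x * Real.sign (x - y)
      = -2 * (E y * qq n y) + cc n * S y := by
  have h : ∫ x, (E x * hermiteP n x) * Real.sign (x - y)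
      = (∫ x in Ioi y, E x * hermiteP n x) - ∫ x in Iic y, E x * hermiteP n x :=
    signSplit (integrable_E_mul (isPoly_hermiteP n))
      (continuous_E.mul (isPoly_hermiteP n).continuous) y
  rw [h, int_Ioi_EH, int_Iic_EH, S_def]
  ring

lemma EH_total (n : ℕ) : ∫ x, E x * hermiteP n x = cc n * ∫ x, E x := by
  have hint1 : Integrable (fun x => E x * (hermiteP n x - cc n)) :=
    integrable_E_mul ((isPoly_hermiteP n).sub (IsPoly.const _))
  have h0 : ∫ x, E x * (hermiteP n x - cc n) = 0 :=
    integral_deriv_eq_zero (f := fun t => E t * qq n t) (Eqq_hasDerivAt n) hint1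
      (tendsto_E_mul_atTop (isPoly_qq n)) (tendsto_E_mul_atBot (isPoly_qq n))
  have hfun : (fun x => E x * hermiteP n x)
      = fun x => E x * (hermiteP n x - cc n) + cc n * E x := by
    funext x; ring
  have hadd : ∫ x, (E x * (hermiteP n x - cc n) + cc n * E x)
      = (∫ x, E x * (hermiteP n x - cc n)) + ∫ x, cc n * E x :=
    integral_add hint1 (integrable_E.const_mul (cc n))
  rw [hfun, hadd, h0, integral_const_mul]
  ring

/-! ### the main formulas -/

noncomputable def NN (n : ℕ) : ℝ :=
  (Real.sqrt (2 ^ n * (n.factorial : ℝ) * Real.sqrt Real.pi))⁻¹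

lemma NN_def (n : ℕ) :
    NN n = (Real.sqrt (2 ^ n * (n.factorial : ℝ) * Real.sqrt Real.pi))⁻¹ := rfl

lemma NN_pos (n : ℕ) : 0 < NN n := by
  rw [NN_def]
  have h1 : (0 : ℝ) < (n.factorial : ℝ) := by
    exact_mod_cast n.factorial_pos
  have h2 : (0 : ℝ) < Real.sqrt Real.pi := Real.sqrt_pos.mpr Real.pi_pos
  have h3 : (0 : ℝ) < 2 ^ n * (n.factorial : ℝ) * Real.sqrt Real.pi := by positivity
  exact inv_pos.mpr (Real.sqrt_pos.mpr h3)

lemma phi_eq (n : ℕ) (x : ℝ) : phi n x = NN n * (E x * hermiteP n x) := by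
  show (Real.sqrt (2 ^ n * (n.factorial : ℝ) * Real.sqrt Real.pi))⁻¹ *
    Real.exp (-x ^ 2 / 2) * hermiteP n x = _
  rw [← E_def, NN_def]
  ring

lemma alph_eq {j k : ℕ} (hj : 0 < j) (hk : 0 < k) (hjk : j ≤ k) :
    alph j k = -2 * (NN (k - 1) * NN (j - 1) * cc (j - 1) * ∫ x, W x * qq (k - 1) x) := by
  have halph : alph j k = ∫ y, ∫ x, phi (k - 1) x * phi (j - 1) y * Real.sign (x - y) := by
    unfold alph
    rw [if_neg (by rintro (h | h) <;> omega)]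
  have hiC : Integrable (fun y => W y * hermiteP (j - 1) y * qq (k - 1) y) :=
    integrable_W_shape (f := fun y => hermiteP (j - 1) y * qq (k - 1) y)
      ((isPoly_hermiteP _).mul (isPoly_qq _)) (fun x => by ring)
  have hiD : Integrable (fun y => E y * hermiteP (j - 1) y * S y) :=
    integrable_E_mul_S (isPoly_hermiteP _)
  have step1 : alph j k = ∫ y, (NN (k - 1) * NN (j - 1)) *
      ((-2) * (W y * hermiteP (j - 1) y * qq (k - 1) y)
        + cc (k - 1) * (E y * hermiteP (j - 1) y * S y)) := by
    rw [halph]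
    congr 1
    funext y
    have h1 : (fun x => phi (k - 1) x * phi (j - 1) y * Real.sign (x - y))
        = fun x => (phi (j - 1) y * NN (k - 1)) *
          (E x * hermiteP (k - 1) x * Real.sign (x - y)) := by
      funext x; rw [phi_eq, phi_eq]; ring
    rw [h1, integral_const_mul, Ginner, phi_eq]
    simp only [W_def]
    ring
  have step2 : ∫ y, ((-2) * (W y * hermiteP (j - 1) y * qq (k - 1) y)
        + cc (k - 1) * (E y * hermiteP (j - 1) y * S y))
      = (-2) * (∫ y, W y * hermiteP (j - 1) y * qq (k - 1) y)
        + cc (k - 1) * ∫ y, E y * hermiteP (j - 1) y * S y := by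
    have e1 : ∫ y, ((-2) * (W y * hermiteP (j - 1) y * qq (k - 1) y)
          + cc (k - 1) * (E y * hermiteP (j - 1) y * S y))
        = (∫ y, (-2) * (W y * hermiteP (j - 1) y * qq (k - 1) y))
          + ∫ y, cc (k - 1) * (E y * hermiteP (j - 1) y * S y) :=
      integral_add (hiC.const_mul _) (hiD.const_mul _)
    rw [e1, integral_const_mul, integral_const_mul]
  rw [step1, integral_const_mul, step2, Amn (by omega), T_eq]
  ring

lemma nu_eq {j : ℕ} (hj : 0 < j) : nu j = NN (j - 1) * (cc (j - 1) * ∫ x, E x) := by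
  unfold nu
  rw [if_neg (by omega)]
  have hfun : (fun x => phi (j - 1) x) = fun x => NN (j - 1) * (E x * hermiteP (j - 1) x) :=
    funext (phi_eq _)
  rw [hfun, integral_const_mul, EH_total]

end Stmt8

open Stmt8

/-- if `k` is odd then `α_{j,k} = 0` for `0 < j ≤ k`; if `k > 0` is even then
`α_{1,k} > 0`; and `α_{j,k} = α_{1,k} ν_j / ν_1` for `0 < j ≤ k`. -/
theorem stmt8 (k : ℕ) (hk : 0 < k) :
    (Odd k → ∀ j : ℕ, 0 < j → j ≤ k → alph j k = 0) ∧
    (Even k → 0 < alph 1 k) ∧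
    (∀ j : ℕ, 0 < j → j ≤ k → alph j k = alph 1 k * nu j / nu 1) := by
  refine ⟨?_, ?_, ?_⟩
  · intro hodd j hj hjk
    obtain ⟨r, hr⟩ := hodd
    rw [alph_eq hj hk hjk, show k - 1 = 2 * r by omega, BB_even r, mul_zero, mul_zero]
  · intro heven
    obtain ⟨r, hr⟩ := heven
    have hr1 : 1 ≤ r := by omega
    rw [alph_eq one_pos hk (by omega), show k - 1 = 2 * (r - 1) + 1 by omega,
      show (1 : ℕ) - 1 = 0 from rfl, cc_zero]
    have hB := BB_odd_neg (r - 1)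
    have hN1 := NN_pos (2 * (r - 1) + 1)
    have hN0 := NN_pos 0
    have hX : NN (2 * (r - 1) + 1) * NN 0 * 1 * (∫ x, W x * qq (2 * (r - 1) + 1) x) < 0 := by
      rw [mul_one]
      exact mul_neg_of_pos_of_neg (mul_pos hN1 hN0) hB
    linarith
  · intro j hj hjk
    rw [alph_eq hj hk hjk, alph_eq one_pos hk (by omega), nu_eq hj, nu_eq one_pos,
      show (1 : ℕ) - 1 = 0 from rfl, cc_zero]
    have hN0 : NN 0 ≠ 0 := ne_of_gt (NN_pos 0)
    have hIE : (∫ x, E x) ≠ 0 := ne_of_gt IE_pos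
    field_simp
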